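/- Let ζ = x e_1 + y e_2 + z e_3 in A_n^m with x,y,z ∈ ℝ. The element ζ is not invertible in A_n^m if and only if ξ_u := x + y a_u + z b_u = 0 for some u ∈ {1,...,m}. Consequently the set of (x,y,z) ∈ ℝ³ corresponding to noninvertible elements is the union of the m straight lines L_u given by {x + y Re a_u + z Re b_u = 0, y Im a_u + z Im b_u = 0}. -/

import Mathlib

/-- `ζ = x e₁ + y e₂ + z e₃` is noninvertible in `A_n^m` iff `ξ_u = 0` for some
`u ≤ m`; moreover `ξ_u = 0` is equivalent to `(x,y,z)` lying on the straight
line `L_u`. -/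
theorem noninvertible_iff_on_line (n m : ℕ) (hm : m ≤ n) (A : Type*)
    [CommRing A] [Algebra ℂ A]
    (I : Module.Basis (Fin n) ℂ A)
    (hidem : ∀ r s : Fin n, r.val < m → s.val < m →
      I r * I s = if r = s then I r else 0)
    (Υ : Fin n → Fin n → Fin n → ℂ)
    (hnil : ∀ r s : Fin n, m ≤ r.val → m ≤ s.val →
      I r * I s = ∑ k ∈ Finset.univ.filter (fun k : Fin n => max r.val s.val < k.val),
        Υ r s k • I k)
    (u : Fin n → Fin n)
    (hu : ∀ s : Fin n, m ≤ s.val → (u s).val < m)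
    (hmul3 : ∀ s : Fin n, m ≤ s.val → ∀ r : Fin n, r.val < m →
      I r * I s = if r = u s then I s else 0)
    (hone : ∑ w ∈ Finset.univ.filter (fun w : Fin n => w.val < m), I w = 1)
    (a b : Fin n → ℂ) (x y z : ℝ) (e₂ e₃ ζ : A)
    (he₂ : e₂ = ∑ r, a r • I r) (he₃ : e₃ = ∑ r, b r • I r)
    (hζ : ζ = (x : ℂ) • (1 : A) + (y : ℂ) • e₂ + (z : ℂ) • e₃)
    (ξ : Fin n → ℂ) (hξ : ∀ w, ξ w = (x : ℂ) + (y : ℂ) * a w + (z : ℂ) * b w) :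
    (¬ IsUnit ζ ↔ ∃ w : Fin n, w.val < m ∧ ξ w = 0)
    ∧ (∀ w : Fin n, w.val < m →
        (ξ w = 0 ↔ (x + y * (a w).re + z * (b w).re = 0
          ∧ y * (a w).im + z * (b w).im = 0))) := by
  classical
  -- coordinates of products of basis vectors, at an index `w < m`
  have hcoord_basis : ∀ w : Fin n, w.val < m → ∀ r s : Fin n,
      I.repr (I r * I s) w = (if r = w then 1 else 0) * (if s = w then 1 else 0) := by
    intro w hw r s
    rcases lt_or_ge r.val m with hr | hr
    · rcases lt_or_ge s.val m with hs | hs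
      · rw [hidem r s hr hs]
        by_cases hrs : r = s
        · subst hrs
          by_cases hrw : r = w <;> simp [hrw, Finsupp.single_apply]
        · have : ¬ (r = w ∧ s = w) := by
            rintro ⟨rfl, rfl⟩; exact hrs rfl
          by_cases hrw : r = w <;> by_cases hsw : s = w <;> simp_all
      · have hsw : s ≠ w := by
          intro h; rw [h] at hs; omega
        rw [hmul3 s hs r hr]
        by_cases hrus : r = u s <;> simp [hrus, hsw, Finsupp.single_apply]
    · have hrw : r ≠ w := by
        intro h; rw [h] at hr; omega
      rcases lt_or_ge s.val m with hs | hs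
      · rw [mul_comm, hmul3 r hr s hs]
        by_cases hsus : s = u r <;> simp [hsus, hrw, Finsupp.single_apply]
      · rw [hnil r s hr hs]
        rw [map_sum]
        rw [Finsupp.finset_sum_apply]
        have : ∀ k ∈ Finset.univ.filter (fun k : Fin n => max r.val s.val < k.val),
            (I.repr (Υ r s k • I k)) w = 0 := by
          intro k hk
          simp only [Finset.mem_filter] at hk
          have hkw : k ≠ w := by
            intro h; rw [h] at hk; omega
          simp [Finsupp.single_apply, hkw]
        rw [Finset.sum_congr rfl this]
        simp [hrw]
  -- the coordinate functional at `w < m` is multiplicative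
  have hcoordmul : ∀ w : Fin n, w.val < m → ∀ p q : A,
      I.repr (p * q) w = I.repr p w * I.repr q w := by
    intro w hw p q
    conv_lhs => rw [← Module.Basis.sum_repr I p, ← Module.Basis.sum_repr I q]
    rw [Finset.sum_mul_sum]
    simp only [smul_mul_smul_comm]
    rw [map_sum, Finsupp.finset_sum_apply]
    have : ∀ r : Fin n, (I.repr (∑ s : Fin n,
        (I.repr p r * I.repr q s) • (I r * I s))) w
        = (if r = w then 1 else 0) * (I.repr p r * I.repr q w) := by
      intro r
      rw [map_sum, Finsupp.finset_sum_apply]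
      have h1 : ∀ s : Fin n, (I.repr ((I.repr p r * I.repr q s) • (I r * I s))) w
          = (I.repr p r * I.repr q s) * ((if r = w then 1 else 0) * (if s = w then 1 else 0)) := by
        intro s
        rw [map_smul, Finsupp.smul_apply, smul_eq_mul, hcoord_basis w hw r s]
      rw [Finset.sum_congr rfl (fun s _ => h1 s)]
      by_cases hrw : r = w <;>
        simp [hrw, mul_ite, Finset.sum_ite_eq', mul_comm]
    rw [Finset.sum_congr rfl (fun r _ => this r)]
    simp [Finset.sum_ite_eq']
  -- coordinate of 1
  have honecoord : ∀ w : Fin n, w.val < m → I.repr (1 : A) w = 1 := by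
    intro w hw
    rw [← hone, map_sum, Finsupp.finset_sum_apply]
    have : ∀ w' : Fin n, (I.repr (I w')) w = if w' = w then 1 else 0 := by
      intro w'; simp [Finsupp.single_apply]
    rw [Finset.sum_congr rfl (fun w' _ => this w')]
    rw [Finset.sum_ite_eq' (Finset.univ.filter (fun w : Fin n => w.val < m)) w (fun _ => (1:ℂ))]
    simp [hw]
  -- coordinate of ζ
  have hcoordζ : ∀ w : Fin n, w.val < m → I.repr ζ w = ξ w := by
    intro w hw
    have h2 : I.repr e₂ w = a w := by
      rw [he₂, map_sum, Finsupp.finset_sum_apply]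
      have : ∀ r : Fin n, (I.repr (a r • I r)) w = if r = w then a r else 0 := by
        intro r
        rw [map_smul, Finsupp.smul_apply, smul_eq_mul]
        simp [Finsupp.single_apply, mul_ite]
      rw [Finset.sum_congr rfl (fun r _ => this r)]
      simp [Finset.sum_ite_eq']
    have h3 : I.repr e₃ w = b w := by
      rw [he₃, map_sum, Finsupp.finset_sum_apply]
      have : ∀ r : Fin n, (I.repr (b r • I r)) w = if r = w then b r else 0 := by
        intro r
        rw [map_smul, Finsupp.smul_apply, smul_eq_mul]
        simp [Finsupp.single_apply, mul_ite]
      rw [Finset.sum_congr rfl (fun r _ => this r)]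
      simp [Finset.sum_ite_eq']
    rw [hζ, hξ]
    simp only [map_add, map_smul, Finsupp.add_apply, Finsupp.smul_apply, smul_eq_mul,
      honecoord w hw, h2, h3, mul_one]
  -- noninvertibility from a vanishing coordinate
  have dir1 : ∀ w : Fin n, w.val < m → ξ w = 0 → ¬ IsUnit ζ := by
    intro w hw hξ0 hunit
    obtain ⟨v, hv⟩ := hunit.exists_right_inv
    have h := hcoordmul w hw ζ v
    rw [hv, hcoordζ w hw, hξ0, zero_mul, honecoord w hw] at h
    exact one_ne_zero h
  -- invertibility when no coordinate vanishes
  have dir2 : (∀ w : Fin n, w.val < m → ξ w ≠ 0) → IsUnit ζ := by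
    intro h
    set Fm := Finset.univ.filter (fun w : Fin n => w.val < m) with hFm
    set Fr := Finset.univ.filter (fun r : Fin n => m ≤ r.val) with hFr
    set s : A := ∑ w ∈ Fm, ξ w • I w with hs
    set t : A := ∑ w ∈ Fm, (ξ w)⁻¹ • I w with ht
    set N : A := ∑ r ∈ Fr, ((y : ℂ) * a r + (z : ℂ) * b r) • I r with hN
    -- s is invertible with inverse t
    have hst : s * t = 1 := by
      rw [hs, ht, Finset.sum_mul_sum]
      have : ∀ w ∈ Fm, (∑ w' ∈ Fm, (ξ w • I w) * ((ξ w')⁻¹ • I w'))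
          = I w := by
        intro w hw
        rw [hFm, Finset.mem_filter] at hw
        have : ∀ w' ∈ Fm, (ξ w • I w) * ((ξ w')⁻¹ • I w')
            = if w' = w then (ξ w * (ξ w)⁻¹) • I w else 0 := by
          intro w' hw'
          rw [hFm, Finset.mem_filter] at hw'
          rw [smul_mul_smul_comm, hidem w w' hw.2 hw'.2]
          by_cases hww : w' = w
          · subst hww; simp
          · have hww' : ¬ w = w' := fun h' => hww h'.symm
            simp [hww, hww']
        rw [Finset.sum_congr rfl this, Finset.sum_ite_eq' Fm w]
        rw [mul_inv_cancel₀ (h w hw.2)]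
        simp [hFm, hw.2]
      rw [Finset.sum_congr rfl this, hone]
    have hsunit : IsUnit s := IsUnit.of_mul_eq_one t hst
    -- ζ decomposes as s + N
    have hζ' : ζ = s + N := by
      have hsum : ∀ c : Fin n → ℂ, (∑ r : Fin n, c r • I r)
          = (∑ r ∈ Fm, c r • I r) + ∑ r ∈ Fr, c r • I r := by
        intro c
        rw [← Finset.sum_filter_add_sum_filter_not Finset.univ (fun r : Fin n => r.val < m)]
        congr 1
        apply Finset.sum_congr _ (fun _ _ => rfl)
        rw [hFr]; ext r; simp [not_lt]
      have hs' : s = (∑ w ∈ Fm, (x : ℂ) • I w) + ((∑ w ∈ Fm, ((y : ℂ) * a w) • I w)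
          + ∑ w ∈ Fm, ((z : ℂ) * b w) • I w) := by
        rw [hs, ← Finset.sum_add_distrib, ← Finset.sum_add_distrib]
        refine Finset.sum_congr rfl (fun w _ => ?_)
        rw [hξ w, add_smul, add_smul, add_assoc]
      have hN' : N = (∑ r ∈ Fr, ((y : ℂ) * a r) • I r) + ∑ r ∈ Fr, ((z : ℂ) * b r) • I r := by
        rw [hN, ← Finset.sum_add_distrib]
        exact Finset.sum_congr rfl (fun r _ => by rw [add_smul])
      rw [hζ, ← hone, he₂, he₃, Finset.smul_sum, Finset.smul_sum, Finset.smul_sum]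
      simp only [smul_smul]
      rw [hsum (fun r => (y : ℂ) * a r), hsum (fun r => (z : ℂ) * b r), hs', hN']
      abel
    -- N is nilpotent
    have hNnil : IsNilpotent N := by
      set Sp : ℕ → Submodule ℂ A := fun j =>
        Submodule.span ℂ {v | ∃ k : Fin n, m + j ≤ k.val ∧ v = I k} with hSp
      have hstep : ∀ j : ℕ, ∀ p q : A, p ∈ Sp j → q ∈ Sp 0 → p * q ∈ Sp (j + 1) := by
        intro j p q hp hq
        have hmem : p * q ∈ Sp j * Sp 0 := Submodule.mul_mem_mul hp hq
        have hle : Sp j * Sp 0 ≤ Sp (j + 1) := by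
          rw [hSp, Submodule.span_mul_span, Submodule.span_le]
          rintro v ⟨v1, ⟨r, hr, rfl⟩, v2, ⟨k0, hk0, rfl⟩, rfl⟩
          have hr' : m ≤ r.val := le_trans (Nat.le_add_right m j) hr
          have hk0' : m ≤ k0.val := by omega
          rw [SetLike.mem_coe]
          show I r * I k0 ∈ Submodule.span ℂ {v | ∃ k : Fin n, m + (j + 1) ≤ k.val ∧ v = I k}
          rw [hnil r k0 hr' hk0']
          refine Submodule.sum_mem _ (fun k hk => ?_)
          rw [Finset.mem_filter] at hk
          refine Submodule.smul_mem _ _ (Submodule.subset_span ⟨k, ?_, rfl⟩)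
          have := hk.2
          omega
        exact hle hmem
      have hbase : N ∈ Sp 0 := by
        rw [hN]
        refine Submodule.sum_mem _ (fun r hr => ?_)
        rw [hFr, Finset.mem_filter] at hr
        exact Submodule.smul_mem _ _ (Submodule.subset_span ⟨r, by omega, rfl⟩)
      have hpow : ∀ j : ℕ, N ^ (j + 1) ∈ Sp j := by
        intro j
        induction j with
        | zero => simpa using hbase
        | succ j ih =>
          rw [pow_succ]
          exact hstep j _ _ ih hbase
      have hSpn : Sp n = ⊥ := by
        rw [hSp]
        convert Submodule.span_empty
        ext v
        simp only [Set.mem_setOf_eq, Set.mem_empty_iff_false, iff_false]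
        rintro ⟨k, hk, rfl⟩
        have := k.isLt
        omega
      refine ⟨n + 1, ?_⟩
      have := hpow n
      rw [hSpn] at this
      simpa using this
    rw [hζ']
    exact hNnil.isUnit_add_left_of_commute hsunit (Commute.all _ _)
  constructor
  · constructor
    · intro hnu
      by_contra hcon
      push_neg at hcon
      exact hnu (dir2 hcon)
    · rintro ⟨w, hw, hξ0⟩
      exact dir1 w hw hξ0
  · intro w hw
    rw [hξ w, Complex.ext_iff]
    have hre : ((x : ℂ) + (y : ℂ) * a w + (z : ℂ) * b w).re
        = x + y * (a w).re + z * (b w).re := by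
      simp [Complex.mul_re]
    have him : ((x : ℂ) + (y : ℂ) * a w + (z : ℂ) * b w).im
        = y * (a w).im + z * (b w).im := by
      simp [Complex.mul_im]
    rw [hre, him]
    simp
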